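/- For a bounded random variable X with distribution given by a finite probability mass function, lim_{β→0⁺} CVaR_β(X) = essinf(X), where CVaR_β(X) = -inf_{ζ} E[ζ + (−X−ζ)₊/β]. -/

import Mathlib

open MeasureTheory

noncomputable def cvar {Ω : Type*} [MeasurableSpace Ω] (μ : Measure Ω)
    (β : ℝ) (X : Ω → ℝ) : ℝ :=
  -⨅ ζ : ℝ, ∫ ω, (ζ + max (-X ω - ζ) 0 / β) ∂μ

theorem cvar_tendsto_essInf
    {Ω : Type*} [MeasurableSpace Ω] (μ : Measure Ω) [IsProbabilityMeasure μ]
    (X : Ω → ℝ) (hXmeas : Measurable X) (hfin : (Set.range X).Finite) :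
    Filter.Tendsto (fun β => cvar μ β X) (nhdsWithin 0 (Set.Ioi 0))
      (nhds (essInf X μ)) := by
  classical
  set S : Set ℝ := {x | x ∈ Set.range X ∧ 0 < μ (X ⁻¹' {x})} with hSdef
  have hSfin : S.Finite := hfin.subset fun x hx => hx.1
  have hSne : S.Nonempty := by
    by_contra h
    rw [Set.not_nonempty_iff_eq_empty] at h
    have hnull : ∀ x ∈ Set.range X, μ (X ⁻¹' {x}) = 0 := by
      intro x hx
      by_contra hz
      have hxS : x ∈ S := ⟨hx, pos_iff_ne_zero.mpr hz⟩
      rw [h] at hxS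
      exact hxS
    have hcover : (Set.univ : Set Ω) ⊆ ⋃ x ∈ Set.range X, X ⁻¹' {x} := by
      intro ω _
      exact Set.mem_biUnion ⟨ω, rfl⟩ rfl
    have h0 : μ Set.univ = 0 :=
      measure_mono_null hcover ((measure_biUnion_null_iff hfin.countable).mpr hnull)
    simp [measure_univ] at h0
  obtain ⟨m, hmS, hmmin⟩ := Set.exists_min_image S id hSfin hSne
  have hp : 0 < μ (X ⁻¹' {m}) := hmS.2
  set pr : ℝ := (μ (X ⁻¹' {m})).toReal with hprdef
  have hprpos : 0 < pr := ENNReal.toReal_pos hp.ne' (measure_ne_top μ _)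
  -- a.e. lower bound
  have hnullset : μ {ω | X ω < m} = 0 := by
    have hsub : {ω | X ω < m} ⊆ ⋃ x ∈ {x | x ∈ Set.range X ∧ x < m}, X ⁻¹' {x} := by
      intro ω hω
      exact Set.mem_biUnion ⟨⟨ω, rfl⟩, hω⟩ rfl
    refine measure_mono_null hsub ?_
    refine (measure_biUnion_null_iff ((hfin.subset fun x hx => hx.1).countable)).mpr ?_
    intro x hx
    by_contra hz
    have hxS : x ∈ S := ⟨hx.1, pos_iff_ne_zero.mpr hz⟩
    exact absurd (hmmin x hxS) (not_le.mpr hx.2)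
  have hae : ∀ᵐ ω ∂μ, m ≤ X ω := by
    rw [ae_iff]
    simpa [not_le] using hnullset
  -- essInf = m
  have hess : essInf X μ = m := by
    rw [essInf_eq_sSup]
    apply IsGreatest.csSup_eq
    constructor
    · exact hnullset
    · intro a ha
      by_contra hlt
      push_neg at hlt
      have hsub : X ⁻¹' {m} ⊆ {x | X x < a} := by
        intro ω hω
        simp only [Set.mem_preimage, Set.mem_singleton_iff] at hω
        simpa [hω] using hlt
      exact absurd (measure_mono_null hsub ha) hp.ne'
  -- boundedness of X
  obtain ⟨C, hC⟩ : ∃ C, ∀ y ∈ (fun x => |x|) '' Set.range X, y ≤ C := (hfin.image _).bddAbove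
  have hCX : ∀ ω, |X ω| ≤ C := fun ω => hC _ ⟨X ω, ⟨ω, rfl⟩, rfl⟩
  -- integrability
  have hint : ∀ ζ : ℝ, Integrable (fun ω => max (-X ω - ζ) 0) μ := by
    intro ζ
    refine (integrable_const (C + |ζ|)).mono' ?_ ?_
    · exact (((hXmeas.neg.sub measurable_const).max measurable_const)).aestronglyMeasurable
    · refine Filter.Eventually.of_forall fun ω => ?_
      have h1 := hCX ω
      have h2 := abs_nonneg ζ
      rw [Real.norm_eq_abs, abs_of_nonneg (le_max_right _ _)]
      rcases le_max_iff.mp (le_refl (max (-X ω - ζ) 0)) with _ | _ <;>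
      · rcases abs_le.mp h1 with ⟨hl, hr⟩
        rcases abs_le.mp (le_refl |ζ|) with ⟨hl2, hr2⟩
        simp only [max_le_iff]
        constructor <;> nlinarith [abs_nonneg (X ω), le_abs_self ζ, neg_abs_le ζ]
  have hFeq : ∀ ζ β : ℝ, (∫ ω, (ζ + max (-X ω - ζ) 0 / β) ∂μ)
      = ζ + (∫ ω, max (-X ω - ζ) 0 ∂μ) / β := by
    intro ζ β
    rw [integral_add (integrable_const ζ) ((hint ζ).div_const β), integral_const,
      probReal_univ, one_smul, integral_div]
  -- main claim: cvar = m for 0 < β ≤ pr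
  have hmain : ∀ β : ℝ, 0 < β → β ≤ pr → cvar μ β X = m := by
    intro β hβ hβpr
    have hlb : ∀ ζ : ℝ, -m ≤ ∫ ω, (ζ + max (-X ω - ζ) 0 / β) ∂μ := by
      intro ζ
      rw [hFeq]
      have hInn : 0 ≤ ∫ ω, max (-X ω - ζ) 0 ∂μ :=
        integral_nonneg fun ω => le_max_right _ _
      rcases le_or_gt (-m) ζ with hcase | hcase
      · have : 0 ≤ (∫ ω, max (-X ω - ζ) 0 ∂μ) / β := div_nonneg hInn hβ.le
        linarith
      · -- ζ < -m
        have hset : ∫ ω in X ⁻¹' {m}, max (-X ω - ζ) 0 ∂μ = (-m - ζ) * pr := by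
          rw [setIntegral_congr_fun (hXmeas (measurableSet_singleton m))
            (g := fun _ => -m - ζ) ?_]
          · rw [setIntegral_const, smul_eq_mul]; simp only [Measure.real, hprdef]; ring
          · intro ω hω
            simp only [Set.mem_preimage, Set.mem_singleton_iff] at hω
            simp only [hω]
            exact max_eq_left (by linarith)
        have hI : (-m - ζ) * pr ≤ ∫ ω, max (-X ω - ζ) 0 ∂μ := by
          rw [← hset]
          exact setIntegral_le_integral (hint ζ)
            (Filter.Eventually.of_forall fun ω => le_max_right _ _)
        have h1 : (-m - ζ) ≤ ((-m - ζ) * pr) / β := by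
          rw [le_div_iff₀ hβ]
          nlinarith
        have h2 : ((-m - ζ) * pr) / β ≤ (∫ ω, max (-X ω - ζ) 0 ∂μ) / β := by
          gcongr
        linarith
    have hub : (∫ ω, (-m + max (-X ω - (-m)) 0 / β) ∂μ) = -m := by
      rw [hFeq]
      have hzero : (fun ω => max (-X ω - (-m)) 0) =ᵐ[μ] (fun _ => (0:ℝ)) := by
        filter_upwards [hae] with ω hω
        exact max_eq_right (by linarith)
      rw [integral_congr_ae hzero, integral_const, probReal_univ,
        one_smul, zero_div, add_zero]
    have hinf : (⨅ ζ : ℝ, ∫ ω, (ζ + max (-X ω - ζ) 0 / β) ∂μ) = -m := by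
      refine le_antisymm ?_ (le_ciInf hlb)
      calc (⨅ ζ : ℝ, ∫ ω, (ζ + max (-X ω - ζ) 0 / β) ∂μ)
          ≤ ∫ ω, (-m + max (-X ω - (-m)) 0 / β) ∂μ := by
            refine ciInf_le ⟨-m, ?_⟩ (-m)
            rintro _ ⟨ζ, rfl⟩
            exact hlb ζ
        _ = -m := hub
    rw [cvar, hinf, neg_neg]
  rw [hess]
  have hev : (fun β => cvar μ β X) =ᶠ[nhdsWithin 0 (Set.Ioi 0)] fun _ => m := by
    filter_upwards [Ioo_mem_nhdsGT_of_mem (Set.left_mem_Ico.mpr hprpos)] with β hβ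
    exact hmain β hβ.1 hβ.2.le
  exact Filter.Tendsto.congr' hev.symm tendsto_const_nhds
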